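/- A bi-directed graph G is Markov equivalent to some undirected graph if and only if its simplicial graph G^s is an undirected graph, which holds if and only if G is a disjoint union of complete bi-directed graphs. -/

import Mathlib

/-- Possible edge types between an ordered pair of distinct vertices of a
simple mixed graph.  `arrowTo` at `(v, w)` means `v → w`, `arrowFrom` means
`v ← w`, `undir` means `v − w` and `bidir` means `v ↔ w`. -/
inductive EType : Type
  | none | undir | arrowTo | arrowFrom | bidir
deriving DecidableEq

/-- The edge type seen from the reversed ordered pair of vertices. -/
def EType.mirror : EType → EType
  | .none => .none
  | .undir => .undir
  | .arrowTo => .arrowFrom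
  | .arrowFrom => .arrowTo
  | .bidir => .bidir

/-- A simple mixed graph: at most one edge (undirected, directed or
bi-directed) between any two distinct vertices, and no self loops. -/
structure MixedGraph (V : Type) where
  E : V → V → EType
  no_loop : ∀ v, E v v = .none
  symm : ∀ v w, E w v = (E v w).mirror

/-- `(a, b, c)` are three consecutive vertices on the path `p`. -/
def ConsecTriple {V : Type} (p : List V) (a b c : V) : Prop :=
  ∃ l1 l2, p = l1 ++ a :: b :: c :: l2

namespace MixedGraph

variable {V : Type} (G : MixedGraph V)

/-- `v − w` is an edge of `G`. -/
def Undir (v w : V) : Prop := G.E v w = .undir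

/-- `v → w` is an edge of `G`. -/
def Dir (v w : V) : Prop := G.E v w = .arrowTo

/-- `v ↔ w` is an edge of `G`. -/
def Bidir (v w : V) : Prop := G.E v w = .bidir

/-- `v` and `w` are adjacent (joined by some edge). -/
def Adj (v w : V) : Prop := G.E v w ≠ .none

/-- The edge between `a` and `b` has an arrowhead at `b`. -/
def HeadAt (a b : V) : Prop := G.E a b = .arrowTo ∨ G.E a b = .bidir

/-- Closed boundary: `v` together with its adjacent vertices. -/
def Bd (v : V) : Set V := insert v {w | G.Adj v w}

/-- A set of vertices is complete if all of its pairs of distinct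
vertices are adjacent. -/
def Complete (S : Set V) : Prop := ∀ v ∈ S, ∀ w ∈ S, v ≠ w → G.Adj v w

/-- A vertex is simplicial if its closed boundary is complete. -/
def Simplicial (v : V) : Prop := G.Complete (G.Bd v)

/-- `v` is an ancestor of `w`: `v = w` or there is a directed path from
`v` to `w`. -/
def Anc (v w : V) : Prop := Relation.ReflTransGen G.Dir v w

/-- The set of ancestors of vertices in `C`. -/
def anSet (C : Set V) : Set V := {v | ∃ c ∈ C, G.Anc v c}

/-- `G` is an ancestral graph. -/
def Ancestral : Prop :=
  (∀ v w, G.Dir v w → ¬ G.Anc w v) ∧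
  (∀ v w, G.Undir v w → ∀ u, ¬ G.HeadAt u v) ∧
  (∀ v w, G.Bidir v w → ¬ G.Anc v w)

/-- The boundary containment property. -/
def BdContain : Prop :=
  (∀ v w, G.Undir v w → G.Bd v = G.Bd w) ∧
  (∀ v w, G.Dir v w → G.Bd v ⊆ G.Bd w)

/-- `b` is a collider between consecutive neighbours `a` and `c`. -/
def Collider (a b c : V) : Prop := G.HeadAt a b ∧ G.HeadAt c b

/-- A path: a list of distinct vertices, consecutive ones adjacent. -/
def IsPath (p : List V) : Prop := p.Nodup ∧ p.Chain' G.Adj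

/-- `p` is an m-connecting path given `C`: every non-collider on it is
outside `C` and every collider on it is an ancestor of `C`. -/
def IsMConnPath (C : Set V) (p : List V) : Prop :=
  G.IsPath p ∧
  ∀ a b c, ConsecTriple p a b c →
    (G.Collider a b c → b ∈ G.anSet C) ∧ (¬ G.Collider a b c → b ∉ C)

/-- `v` and `w` are m-connected given `C`. -/
def MConn (v w : V) (C : Set V) : Prop :=
  ∃ p, G.IsMConnPath C p ∧ p.head? = some v ∧ p.getLast? = some w

/-- `v` and `w` are m-separated given `C`. -/
def MSep (v w : V) (C : Set V) : Prop := ¬ G.MConn v w C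

/-- A maximal (ancestral) graph: every pair of distinct non-adjacent
vertices is m-separated given some set. -/
def Maximal : Prop :=
  ∀ v w, v ≠ w → ¬ G.Adj v w → ∃ C : Set V, v ∉ C ∧ w ∉ C ∧ G.MSep v w C

/-- `G` is a bi-directed graph. -/
def Bidirected : Prop := ∀ v w, G.E v w = .none ∨ G.E v w = .bidir

/-- `G` is an undirected graph. -/
def UndirectedG : Prop := ∀ v w, G.E v w = .none ∨ G.E v w = .undir

/-- `G` is a directed acyclic graph. -/
def IsDAG : Prop :=
  (∀ v w, G.E v w = .none ∨ G.E v w = .arrowTo ∨ G.E v w = .arrowFrom) ∧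
  (∀ v w, G.Dir v w → ¬ G.Anc w v)

/-- `G` and `H` have the same skeleton. -/
def SameSkeleton (H : MixedGraph V) : Prop := ∀ v w, G.Adj v w ↔ H.Adj v w

/-- `G` and `H` are Markov equivalent: their m-separation relations
coincide. -/
def MarkovEquiv (H : MixedGraph V) : Prop :=
  ∀ v w (C : Set V), v ≠ w → v ∉ C → w ∉ C → (G.MSep v w C ↔ H.MSep v w C)

open Classical in
/-- The edge map obtained from `G` by dropping all arrowheads at
simplicial vertices. -/
noncomputable def dropE (v w : V) : EType :=
  match G.E v w with
  | .none => .none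
  | .undir => .undir
  | .arrowTo => if G.Simplicial w then .undir else .arrowTo
  | .arrowFrom => if G.Simplicial v then .undir else .arrowFrom
  | .bidir =>
      if G.Simplicial v then (if G.Simplicial w then .undir else .arrowTo)
      else (if G.Simplicial w then .arrowFrom else .bidir)

/-- The graph obtained from `G` by dropping all arrowheads at simplicial
vertices; for a bi-directed graph `G` this is the simplicial graph `Gˢ`. -/
noncomputable def drop : MixedGraph V where
  E := G.dropE
  no_loop v := by simp [dropE, G.no_loop]
  symm v w := by
    unfold dropE
    rw [G.symm v w]
    cases h : G.E v w <;>
      simp only [EType.mirror] <;> split_ifs <;> simp_all [EType.mirror]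

open Classical in
/-- The edge map of the minimally oriented graph `G^min_<`: starting from
the simplicial graph, each bi-directed edge `v ↔ w` with `Bd v ⊆ Bd w`
and `v < w` is replaced by `v → w`. -/
noncomputable def gminE [LinearOrder V] (v w : V) : EType :=
  match G.dropE v w with
  | .bidir =>
      if G.Bd v ⊆ G.Bd w ∧ v < w then .arrowTo
      else if G.Bd w ⊆ G.Bd v ∧ w < v then .arrowFrom
      else .bidir
  | e => e

/-- The graph `G^min_<` produced by Algorithm 4.2 from `G` and the total
order on `V`. -/
noncomputable def gmin [LinearOrder V] : MixedGraph V where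
  E := G.gminE
  no_loop v := by
    have h := G.drop.no_loop v
    simp only [drop] at h
    simp [gminE, h]
  symm v w := by
    have h := G.drop.symm v w
    simp only [drop] at h
    unfold gminE
    rw [h]
    cases hE : G.dropE v w <;> simp only [EType.mirror]
    case bidir =>
      by_cases c1 : G.Bd v ⊆ G.Bd w ∧ v < w
      · have c2 : ¬ (G.Bd w ⊆ G.Bd v ∧ w < v) := fun h' => lt_asymm c1.2 h'.2
        simp [c1, c2, EType.mirror]
      · by_cases c2 : G.Bd w ⊆ G.Bd v ∧ w < v
        · simp [c1, c2, EType.mirror]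
        · simp [c1, c2, EType.mirror]

/-- Total number of arrowheads of `G`: the number of directed edges plus
twice the number of bi-directed edges. -/
noncomputable def arr : ℕ :=
  {p : V × V | G.Dir p.1 p.2}.ncard + {p : V × V | G.Bidir p.1 p.2}.ncard

end MixedGraph

/-- `Gm` is a minimally oriented graph for `G`. -/
def MinOriented {V : Type} (G Gm : MixedGraph V) : Prop :=
  Gm.Ancestral ∧ Gm.Maximal ∧ G.MarkovEquiv Gm ∧
  ∀ H : MixedGraph V, H.Ancestral → H.Maximal → G.MarkovEquiv H → Gm.arr ≤ H.arr

section Aux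

namespace MixedGraph

variable {V : Type} {G : MixedGraph V}

lemma aux_mirror_none {e : EType} : e.mirror = .none ↔ e = .none := by
  cases e <;> simp [EType.mirror]

lemma aux_adj_symm {v w : V} (h : G.Adj v w) : G.Adj w v := by
  unfold Adj at *
  rw [G.symm]
  intro h'
  exact h (aux_mirror_none.mp h')

lemma aux_adj_bidir (hG : G.Bidirected) {v w : V} (h : G.Adj v w) :
    G.E v w = .bidir := (hG v w).resolve_left h

lemma aux_no_dir (hG : G.Bidirected) (v w : V) : ¬ G.Dir v w := by
  intro h
  rcases hG v w with h' | h' <;> rw [Dir, h'] at h <;> exact absurd h (by simp)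

lemma aux_anc_eq (hG : G.Bidirected) {v w : V} (h : G.Anc v w) : v = w := by
  induction h with
  | refl => rfl
  | tail _ hd _ => exact absurd hd (aux_no_dir hG _ _)

lemma aux_anSet_mem (hG : G.Bidirected) {C : Set V} {x : V}
    (h : x ∈ G.anSet C) : x ∈ C := by
  obtain ⟨c, hc, hanc⟩ := h
  rwa [aux_anc_eq hG hanc]

lemma aux_bidir_symm {v w : V} (h : G.E v w = .bidir) : G.E w v = .bidir := by
  rw [G.symm v w, h]; rfl

lemma aux_adj_trans (hS : ∀ v, G.Simplicial v) {a b c : V}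
    (h1 : G.Adj a b) (h2 : G.Adj b c) : a = c ∨ G.Adj a c := by
  by_cases h : a = c
  · exact Or.inl h
  · exact Or.inr (hS b a (Set.mem_insert_of_mem _ (aux_adj_symm h1)) c
      (Set.mem_insert_of_mem _ h2) h)

lemma aux_consec_two {x y a b c : V} (h : ConsecTriple [x, y] a b c) : False := by
  obtain ⟨l1, l2, h⟩ := h
  have := congrArg List.length h
  simp [List.length_append] at this
  omega

lemma aux_consec_three {a b c a' b' c' : V} (h : ConsecTriple [a, b, c] a' b' c') :
    a' = a ∧ b' = b ∧ c' = c := by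
  obtain ⟨l1, l2, h⟩ := h
  rcases l1 with _ | ⟨x, l1⟩
  · simp only [List.nil_append] at h
    injection h with h1 h
    injection h with h2 h
    injection h with h3 h
    have : l2 = [] := h.symm
    exact ⟨h1.symm, h2.symm, h3.symm⟩
  · have := congrArg List.length h
    simp [List.length_append] at this
    omega

lemma aux_chain_endpoints (H : MixedGraph V)
    (ht : ∀ a b c, H.Adj a b → H.Adj b c → a = c ∨ H.Adj a c) :
    ∀ p : List V, p.Chain' H.Adj → ∀ v w, p.head? = some v →
      p.getLast? = some w → v = w ∨ H.Adj v w := by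
  intro p
  induction p with
  | nil => intro _ v w h; simp at h
  | cons x q ih =>
    intro hch v w hh hl
    have hx : x = v := by simpa using hh
    subst hx
    cases q with
    | nil =>
      left
      simpa using hl
    | cons y r =>
      rw [List.Chain', List.isChain_cons_cons] at hch
      have hl' : (y :: r).getLast? = some w := by
        rw [List.getLast?_cons_cons] at hl
        exact hl
      rcases ih hch.2 y w rfl hl' with h | h
      · subst h; exact Or.inr hch.1
      · exact ht x y w hch.1 h

lemma aux_mconn_of_adj (H : MixedGraph V) {v w : V} {C : Set V}
    (hne : v ≠ w) (hadj : H.Adj v w) : H.MConn v w C := by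
  refine ⟨[v, w], ⟨⟨by simp [hne], by simp [List.Chain', hadj]⟩,
    fun a b c htr => absurd htr (fun h => aux_consec_two h)⟩, rfl, by simp⟩

lemma aux_msep_iff_not_adj (H : MixedGraph V)
    (ht : ∀ a b c, H.Adj a b → H.Adj b c → a = c ∨ H.Adj a c)
    {v w : V} {C : Set V} (hne : v ≠ w) : H.MSep v w C ↔ ¬ H.Adj v w := by
  constructor
  · intro hs hadj
    exact hs (aux_mconn_of_adj H hne hadj)
  · rintro hna ⟨p, ⟨⟨hnd, hch⟩, _⟩, hh, hl⟩
    rcases aux_chain_endpoints H ht p hch v w hh hl with h | h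
    · exact hne h
    · exact hna h

lemma aux_dropE_none_iff {v w : V} : G.dropE v w = .none ↔ G.E v w = .none := by
  unfold dropE
  cases h : G.E v w <;> simp <;> split_ifs <;> simp

lemma aux_drop_adj {v w : V} : (G.drop).Adj v w ↔ G.Adj v w := by
  show G.dropE v w ≠ .none ↔ G.E v w ≠ .none
  exact not_congr aux_dropE_none_iff

lemma aux_drop_undir (hG : G.Bidirected) (hS : ∀ v, G.Simplicial v) :
    (G.drop).UndirectedG := by
  intro v w
  rcases hG v w with h | h
  · left; show G.dropE v w = .none; unfold dropE; rw [h]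
  · right; show G.dropE v w = .undir; unfold dropE; rw [h]
    simp [hS v, hS w]

lemma aux_simp_of_drop (hG : G.Bidirected) (hU : (G.drop).UndirectedG) :
    ∀ v, G.Simplicial v := by
  intro v
  by_cases hA : ∃ w, G.Adj v w
  · obtain ⟨w, hw⟩ := hA
    have hb : G.E v w = .bidir := aux_adj_bidir hG hw
    by_contra hns
    have hne : G.dropE v w ≠ .none ∧ G.dropE v w ≠ .undir := by
      unfold dropE; rw [hb]
      by_cases hsw : G.Simplicial w <;> simp [hns, hsw]
    rcases hU v w with h | h
    · exact hne.1 h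
    · exact hne.2 h
  · intro a ha c hc hne
    exfalso
    apply hne
    have hav : a = v := by
      rcases Set.mem_insert_iff.mp ha with h | h
      · exact h
      · exact absurd ⟨a, h⟩ hA
    have hcv : c = v := by
      rcases Set.mem_insert_iff.mp hc with h | h
      · exact h
      · exact absurd ⟨c, h⟩ hA
    rw [hav, hcv]

/-- The connected-component setoid of a graph all of whose vertices are
simplicial. -/
def auxSetoid (G : MixedGraph V) (hS : ∀ v, G.Simplicial v) : Setoid V where
  r v w := v = w ∨ G.Adj v w
  iseqv := by
    refine ⟨fun v => Or.inl rfl, ?_, ?_⟩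
    · intro x y h
      exact h.imp Eq.symm aux_adj_symm
    · intro x y z h1 h2
      rcases h1 with rfl | h1
      · exact h2
      · rcases h2 with rfl | h2
        · exact Or.inr h1
        · exact aux_adj_trans hS h1 h2

lemma aux_markov_drop (hG : G.Bidirected) (hS : ∀ v, G.Simplicial v) :
    G.MarkovEquiv G.drop := by
  intro v w C hne _ _
  have htG : ∀ a b c, G.Adj a b → G.Adj b c → a = c ∨ G.Adj a c :=
    fun a b c h1 h2 => aux_adj_trans hS h1 h2
  have htD : ∀ a b c, (G.drop).Adj a b → (G.drop).Adj b c →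
      a = c ∨ (G.drop).Adj a c := by
    intro a b c h1 h2
    exact (htG a b c (aux_drop_adj.mp h1) (aux_drop_adj.mp h2)).imp id
      aux_drop_adj.mpr
  rw [aux_msep_iff_not_adj G htG hne, aux_msep_iff_not_adj G.drop htD hne]
  exact not_congr aux_drop_adj.symm

lemma aux_simp_of_equiv (hG : G.Bidirected) {U : MixedGraph V}
    (hU : U.UndirectedG) (hME : G.MarkovEquiv U) : ∀ v, G.Simplicial v := by
  intro v
  by_contra hns
  unfold Simplicial Complete at hns
  push_neg at hns
  obtain ⟨a, ha, c, hc, hac, hnadj⟩ := hns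
  -- a and c are proper neighbours of v
  have hva : G.Adj v a := by
    rcases Set.mem_insert_iff.mp ha with h | h
    · subst h
      rcases Set.mem_insert_iff.mp hc with h' | h'
      · exact absurd h'.symm hac
      · exact absurd h' hnadj
    · exact h
  have hvc : G.Adj v c := by
    rcases Set.mem_insert_iff.mp hc with h | h
    · subst h
      exact absurd (aux_adj_symm hva) hnadj
    · exact h
  have hav : a ≠ v := fun h => by subst h; exact hnadj hvc
  have hcv : c ≠ v := fun h => by subst h; exact hnadj (aux_adj_symm hva)
  -- G m-separates a and c given ∅
  have hsep0 : G.MSep a c ∅ := by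
    rintro ⟨p, ⟨⟨hnd, hch⟩, htr⟩, hh, hl⟩
    rcases p with _ | ⟨x, _ | ⟨y, _ | ⟨z, r⟩⟩⟩
    · simp at hh
    · have hx : x = a := by simpa using hh
      have hx' : x = c := by simpa using hl
      exact hac (hx ▸ hx' ▸ rfl)
    · have hx : x = a := by simpa using hh
      have hy : y = c := by simpa using hl
      have : G.Adj x y := (List.isChain_cons_cons.mp hch).1
      exact hnadj (hx ▸ hy ▸ this)
    · have htrip : ConsecTriple (x :: y :: z :: r) x y z := ⟨[], r, rfl⟩
      have h1 : G.Adj x y := (List.isChain_cons_cons.mp hch).1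
      have h2 : G.Adj y z := (List.isChain_cons_cons.mp (List.isChain_cons_cons.mp hch).2).1
      have hcol : G.Collider x y z :=
        ⟨Or.inr (aux_adj_bidir hG h1),
         Or.inr (aux_bidir_symm (aux_adj_bidir hG h2))⟩
      have hy := (htr x y z htrip).1 hcol
      exact Set.notMem_empty y (aux_anSet_mem hG hy)
  -- G m-connects a and c given {v}
  have hconn : G.MConn a c {v} := by
    refine ⟨[a, v, c], ⟨⟨by simp [hav, hcv.symm, hac], ?_⟩, ?_⟩, rfl, by simp⟩
    · simp [List.Chain', aux_adj_symm hva, hvc]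
    · intro a' b' c' htr
      obtain ⟨h1, h2, h3⟩ := aux_consec_three htr
      constructor
      · intro _
        rw [h2]
        exact ⟨v, Set.mem_singleton v, Relation.ReflTransGen.refl⟩
      · intro hnc
        rw [h1, h2, h3] at hnc
        exact fun _ => hnc ⟨Or.inr (aux_bidir_symm (aux_adj_bidir hG hva)),
          Or.inr (aux_bidir_symm (aux_adj_bidir hG hvc))⟩
  -- transfer to U
  have hUsep0 : U.MSep a c ∅ :=
    (hME a c ∅ hac (Set.notMem_empty a) (Set.notMem_empty c)).mp hsep0
  have hUconn : U.MConn a c {v} := by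
    have h1 : ¬ G.MSep a c {v} := fun h => h hconn
    have h2 : ¬ U.MSep a c {v} := fun h =>
      h1 ((hME a c {v} hac (by simpa using hav) (by simpa using hcv)).mpr h)
    exact not_not.mp h2
  obtain ⟨p, ⟨hp, htr⟩, hh, hl⟩ := hUconn
  refine hUsep0 ⟨p, ⟨hp, ?_⟩, hh, hl⟩
  intro a' b' c' htrip
  constructor
  · intro hcol
    rcases hcol.1 with h | h <;> rcases hU a' b' with h' | h' <;> simp_all
  · intro _
    exact Set.notMem_empty b'

end MixedGraph

end Aux

/-- A bi-directed graph `G` is Markov equivalent to some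
undirected graph iff its simplicial graph `Gˢ` is undirected, which holds
iff `G` is a disjoint union of complete (bi-directed) graphs. -/
theorem stmt10 {V : Type} (G : MixedGraph V) (hG : G.Bidirected) :
    ((∃ U : MixedGraph V, U.UndirectedG ∧ G.MarkovEquiv U) ↔ (G.drop).UndirectedG) ∧
    ((G.drop).UndirectedG ↔
      ∃ (ι : Type) (A : ι → Set V),
        (∀ v : V, ∃! i : ι, v ∈ A i) ∧
        (∀ (i j : ι) (v w : V), v ∈ A i → w ∈ A j → G.Adj v w → i = j) ∧
        (∀ i : ι, G.Complete (A i))) := by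
  constructor
  · constructor
    · rintro ⟨U, hU, hME⟩
      exact MixedGraph.aux_drop_undir hG (MixedGraph.aux_simp_of_equiv hG hU hME)
    · intro hDU
      exact ⟨G.drop, hDU,
        MixedGraph.aux_markov_drop hG (MixedGraph.aux_simp_of_drop hG hDU)⟩
  · constructor
    · intro hDU
      have hS := MixedGraph.aux_simp_of_drop hG hDU
      refine ⟨Quotient (MixedGraph.auxSetoid G hS),
        fun i => {v | Quotient.mk (MixedGraph.auxSetoid G hS) v = i}, ?_, ?_, ?_⟩
      · intro v
        exact ⟨Quotient.mk _ v, rfl, fun y hy => hy.symm⟩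
      · intro i j v w hv hw hadj
        rw [← hv, ← hw]
        exact Quotient.sound (Or.inr hadj)
      · intro i v hv w hw hne
        have h := Quotient.exact ((hv : _ = i).trans (hw : _ = i).symm)
        rcases h with h | h
        · exact absurd h hne
        · exact h
    · rintro ⟨ι, A, huniq, hsame, hcomp⟩
      have hS : ∀ v, G.Simplicial v := by
        intro v
        obtain ⟨i, hvi, -⟩ := huniq v
        intro a ha c hc hne
        have memA : ∀ x, x ∈ G.Bd v → x ∈ A i := by
          intro x hx
          rcases Set.mem_insert_iff.mp hx with rfl | hadj
          · exact hvi
          · obtain ⟨j, hxj, -⟩ := huniq x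
            have hij := hsame i j v x hvi hxj hadj
            rw [hij]
            exact hxj
        exact hcomp i a (memA a ha) c (memA c hc) hne
      exact MixedGraph.aux_drop_undir hG hS
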